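/- Let L_c^N be the cloning generator on E^N with escape rates λ, jump kernel p, potential V ∈ C_b(E), constant c, and clone-size distribution π_{x,·} with mean M(x) = (V(x) − c)⁺/λ(x). Then for every mean-field observable F(x) = m(x)(f) with f ∈ C_b(E), L_c^N F(x) = m(x)(L̄_{m(x),c}(f)), where m(x) = (1/N)Σ δ_{x_i} is the empirical measure and L̄_{μ,c}(f)(x) = L(f)(x) + ∫_E ((V(x) − c)⁻ + (V(y) − c)⁺)(f(y) − f(x)) μ(dy). -/

import Mathlib

open MeasureTheory

/-- `x^{A,w;i,y}`: coordinate `i` replaced by `y`, coordinates in `A` (other than `i`)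
replaced by `w`. -/
def repl {E : Type*} {N : ℕ} (x : Fin N → E) (A : Finset (Fin N))
    (w : E) (i : Fin N) (y : E) : Fin N → E :=
  fun j => if j = i then y else if j ∈ A then w else x j


lemma sum_card_aux {N : ℕ} (F : ℕ → ℝ) :
    ∑ A : Finset (Fin N), F A.card = ∑ n ∈ Finset.range (N + 1), (N.choose n : ℝ) * F n := by
  have h := Finset.sum_powerset_apply_card F (x := (Finset.univ : Finset (Fin N)))
  rw [Finset.powerset_univ, Finset.card_univ, Fintype.card_fin] at h
  simpa [nsmul_eq_mul] using h

lemma sum_card_mem_aux {N : ℕ} (hN : 0 < N) (F : ℕ → ℝ) (j : Fin N) :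
    ∑ A : Finset (Fin N), (if j ∈ A then F A.card else 0)
      = ∑ k ∈ Finset.range N, ((N - 1).choose k : ℝ) * F (k + 1) := by
  have huniv : (Finset.univ : Finset (Fin N)) = insert j (Finset.univ.erase j) :=
    (Finset.insert_erase (Finset.mem_univ j)).symm
  have hnot : j ∉ Finset.univ.erase j := Finset.notMem_erase j _
  calc ∑ A : Finset (Fin N), (if j ∈ A then F A.card else 0)
      = ∑ A ∈ (insert j (Finset.univ.erase j)).powerset, (if j ∈ A then F A.card else 0) := by
        rw [← huniv, Finset.powerset_univ]
    _ = (∑ t ∈ (Finset.univ.erase j).powerset, (if j ∈ t then F t.card else 0))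
        + ∑ t ∈ (Finset.univ.erase j).powerset, (if j ∈ insert j t then F (insert j t).card else 0) :=
        Finset.sum_powerset_insert hnot _
    _ = ∑ t ∈ (Finset.univ.erase j).powerset, F (t.card + 1) := by
        have h1 : ∀ t ∈ (Finset.univ.erase j).powerset,
            (if j ∈ t then F t.card else 0) = 0 := fun t ht =>
          if_neg (fun hjt => hnot (Finset.mem_powerset.1 ht hjt))
        have h2 : ∀ t ∈ (Finset.univ.erase j).powerset,
            (if j ∈ insert j t then F (insert j t).card else 0) = F (t.card + 1) := fun t ht => by
          rw [if_pos (Finset.mem_insert_self j t),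
            Finset.card_insert_of_notMem (fun hjt => hnot (Finset.mem_powerset.1 ht hjt))]
        rw [Finset.sum_congr rfl h1, Finset.sum_congr rfl h2, Finset.sum_const, smul_zero,
          zero_add]
    _ = ∑ k ∈ Finset.range N, ((N - 1).choose k : ℝ) * F (k + 1) := by
        have h := Finset.sum_powerset_apply_card (fun k => F (k + 1))
          (x := (Finset.univ.erase j))
        rw [Finset.card_erase_of_mem (Finset.mem_univ j), Finset.card_univ, Fintype.card_fin,
          Nat.sub_add_cancel hN] at h
        simpa [nsmul_eq_mul] using h

lemma wsum_one {N : ℕ} (π : ℕ → ℝ) (hπsum : ∑ n ∈ Finset.range (N + 1), π n = 1) :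
    ∑ A : Finset (Fin N), π A.card / (N.choose A.card : ℝ) = 1 := by
  rw [sum_card_aux (fun n => π n / (N.choose n : ℝ)), ← hπsum]
  refine Finset.sum_congr rfl fun n hn => ?_
  have hpos : 0 < N.choose n := Nat.choose_pos (Nat.lt_succ_iff.1 (Finset.mem_range.1 hn))
  have : (N.choose n : ℝ) ≠ 0 := Nat.cast_ne_zero.2 hpos.ne'
  field_simp

lemma wsum_mem {N : ℕ} (hN : 0 < N) (π : ℕ → ℝ) (j : Fin N) :
    ∑ A : Finset (Fin N), (if j ∈ A then π A.card / (N.choose A.card : ℝ) else 0)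
      = (∑ n ∈ Finset.range (N + 1), (n : ℝ) * π n) / N := by
  rw [sum_card_mem_aux hN (fun n => π n / (N.choose n : ℝ)) j]
  have hshift : ∑ n ∈ Finset.range (N + 1), (n : ℝ) * π n
      = ∑ k ∈ Finset.range N, ((k : ℝ) + 1) * π (k + 1) := by
    rw [Finset.sum_range_succ' (fun n => (n : ℝ) * π n) N]
    push_cast
    simp
  rw [hshift, Finset.sum_div]
  refine Finset.sum_congr rfl fun k hk => ?_
  have hk' : k < N := Finset.mem_range.1 hk
  have hid : (N : ℕ) * (N - 1).choose k = N.choose (k + 1) * (k + 1) := by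
    have := Nat.add_one_mul_choose_eq (N - 1) k
    rwa [Nat.sub_add_cancel hN] at this
  have hchoosepos : 0 < N.choose (k + 1) := Nat.choose_pos hk'
  have hc : (N.choose (k + 1) : ℝ) ≠ 0 := Nat.cast_ne_zero.2 hchoosepos.ne'
  have hNne : (N : ℝ) ≠ 0 := Nat.cast_ne_zero.2 hN.ne'
  have hidR : (N : ℝ) * ((N - 1).choose k : ℝ) = (N.choose (k + 1) : ℝ) * ((k : ℝ) + 1) := by
    exact_mod_cast congrArg (Nat.cast : ℕ → ℝ) hid
  field_simp
  linear_combination π (k + 1) * hidR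

lemma sum_repl {E : Type*} {N : ℕ} (f : E → ℝ) (x : Fin N → E) (A : Finset (Fin N))
    (w : E) (i : Fin N) (y : E) :
    ∑ j, f (repl x A w i y j)
      = f y + (∑ j, f (x j)) - f (x i)
        + ∑ j ∈ Finset.univ.erase i, (if j ∈ A then f w - f (x j) else 0) := by
  have h1 : ∑ j, f (repl x A w i y j)
      = f (repl x A w i y i) + ∑ j ∈ Finset.univ.erase i, f (repl x A w i y j) :=
    (Finset.add_sum_erase _ _ (Finset.mem_univ i)).symm
  have h2 : f (repl x A w i y i) = f y := by simp [repl]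
  have h3 : ∀ j ∈ Finset.univ.erase i, f (repl x A w i y j)
      = f (x j) + (if j ∈ A then f w - f (x j) else 0) := by
    intro j hj
    have hji : j ≠ i := (Finset.mem_erase.1 hj).1
    simp only [repl, if_neg hji]
    split_ifs <;> ring
  rw [h1, h2, Finset.sum_congr rfl h3, Finset.sum_add_distrib,
    Finset.sum_erase_eq_sub (Finset.mem_univ i)]
  ring

lemma integrand_eq {E : Type*} {N : ℕ} (hN : 0 < N) (π : ℕ → ℝ)
    (hπsum : ∑ n ∈ Finset.range (N + 1), π n = 1)
    (f : E → ℝ) (x : Fin N → E) (i : Fin N) (y : E) :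
    ∑ A : Finset (Fin N), (π A.card / (N.choose A.card : ℝ)) *
        ((∑ j, f (repl x A (x i) i y j)) / N - (∑ j, f (x j)) / N)
      = (f y - f (x i)) / N
        + ((∑ n ∈ Finset.range (N + 1), (n : ℝ) * π n) / N)
          * ((∑ j, (f (x i) - f (x j))) / N) := by
  have hstep : ∀ A : Finset (Fin N),
      (π A.card / (N.choose A.card : ℝ)) *
        ((∑ j, f (repl x A (x i) i y j)) / N - (∑ j, f (x j)) / N)
      = (π A.card / (N.choose A.card : ℝ)) * ((f y - f (x i)) / N)
        + (1 / N) * ∑ j ∈ Finset.univ.erase i,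
            (if j ∈ A then π A.card / (N.choose A.card : ℝ) else 0) * (f (x i) - f (x j)) := by
    intro A
    rw [sum_repl]
    have : ∑ j ∈ Finset.univ.erase i,
        (if j ∈ A then π A.card / (N.choose A.card : ℝ) else 0) * (f (x i) - f (x j))
      = (π A.card / (N.choose A.card : ℝ)) *
          ∑ j ∈ Finset.univ.erase i, (if j ∈ A then f (x i) - f (x j) else 0) := by
      rw [Finset.mul_sum]
      refine Finset.sum_congr rfl fun j hj => ?_
      split_ifs <;> ring
    rw [this]
    ring
  rw [Finset.sum_congr rfl fun A _ => hstep A, Finset.sum_add_distrib, ← Finset.sum_mul,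
    wsum_one π hπsum, one_mul, ← Finset.mul_sum, Finset.sum_comm]
  have hinner : ∀ j ∈ Finset.univ.erase i,
      ∑ A : Finset (Fin N), (if j ∈ A then π A.card / (N.choose A.card : ℝ) else 0)
          * (f (x i) - f (x j))
        = ((∑ n ∈ Finset.range (N + 1), (n : ℝ) * π n) / N) * (f (x i) - f (x j)) := by
    intro j hj
    rw [← Finset.sum_mul, wsum_mem hN π j]
  rw [Finset.sum_congr rfl hinner, ← Finset.mul_sum,
    Finset.sum_erase_eq_sub (f := fun j => f (x i) - f (x j)) (Finset.mem_univ i)]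
  ring

lemma final_alg (N : ℕ) (l d g P Q : Fin N → ℝ) :
    (∑ i, (l i * (d i / (N : ℝ)) + (1 / (N : ℝ))^2 * ∑ j, P i * (g i - g j)))
      + ∑ i, Q i * (1 / (N : ℝ) * ∑ j, (g j - g i) / (N : ℝ))
    = 1 / (N : ℝ) * ∑ i, (l i * d i + 1 / (N : ℝ) * ∑ j, (Q i + P j) * (g j - g i)) := by
  have hswap : ∑ i : Fin N, ∑ j : Fin N, P i * (g i - g j)
      = ∑ i : Fin N, ∑ j : Fin N, P j * (g j - g i) := Finset.sum_comm
  have hA : ∑ i : Fin N, l i * (d i / (N : ℝ)) = 1 / (N : ℝ) * ∑ i, l i * d i := by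
    rw [Finset.mul_sum]
    exact Finset.sum_congr rfl fun i _ => by ring
  have hB : ∑ i : Fin N, (1 / (N : ℝ))^2 * ∑ j, P i * (g i - g j)
      = (1 / (N : ℝ))^2 * ∑ i : Fin N, ∑ j, P i * (g i - g j) := (Finset.mul_sum _ _ _).symm
  have hC : ∑ i : Fin N, Q i * (1 / (N : ℝ) * ∑ j, (g j - g i) / (N : ℝ))
      = (1 / (N : ℝ))^2 * ∑ i : Fin N, Q i * ∑ j, (g j - g i) := by
    rw [Finset.mul_sum]
    refine Finset.sum_congr rfl fun i _ => ?_
    rw [← Finset.sum_div]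
    ring
  have hD : (1 : ℝ) / (N : ℝ) * ∑ i : Fin N, (l i * d i + 1 / (N : ℝ) * ∑ j, (Q i + P j) * (g j - g i))
      = 1 / (N : ℝ) * ∑ i, l i * d i
        + (1 / (N : ℝ))^2 * ∑ i : Fin N, ∑ j, (Q i + P j) * (g j - g i) := by
    rw [Finset.sum_add_distrib, mul_add, ← Finset.mul_sum]
    ring
  rw [Finset.sum_add_distrib, hA, hB, hC, hD, add_assoc]
  congr 1
  rw [← mul_add]
  congr 1
  rw [hswap, ← Finset.sum_add_distrib]
  refine Finset.sum_congr rfl fun i _ => ?_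
  rw [Finset.mul_sum, ← Finset.sum_add_distrib]
  exact Finset.sum_congr rfl fun j _ => by ring

/-- Proposition 3.3: the cloning generator applied to a mean-field observable
`F(x) = m(x)(f)` equals `m(x)(L̄_{m(x),c} f)` where `L̄_{μ,c}` is the McKean generator with
selection rates `W̃_c(x,y) = (V(x)−c)⁻ + (V(y)−c)⁺`, provided the clone-size mean is
`M(z) = (V(z)−c)⁺/λ(z)`. -/
theorem stmt10 {E : Type*} [MeasurableSpace E] (N : ℕ) (hN : 0 < N)
    (lam : E → ℝ) (hlam : ∀ z, 0 < lam z)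
    (p : E → Measure E) (hp : ∀ z, IsProbabilityMeasure (p z))
    (V : E → ℝ) (c : ℝ)
    (π : E → ℕ → ℝ) (hπ0 : ∀ z n, 0 ≤ π z n)
    (hπsum : ∀ z, ∑ n ∈ Finset.range (N + 1), π z n = 1)
    (hmean : ∀ z, ∑ n ∈ Finset.range (N + 1), (n : ℝ) * π z n = max (V z - c) 0 / lam z)
    (f : E → ℝ) (hf : ∀ z, Integrable f (p z))
    (x : Fin N → E) :
    (∑ i, lam (x i) * ∫ y, (∑ A : Finset (Fin N),
        (π (x i) A.card / (N.choose A.card : ℝ)) *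
          ((∑ j, f (repl x A (x i) i y j)) / N - (∑ j, f (x j)) / N)) ∂(p (x i)))
      + (∑ i, max (-(V (x i) - c)) 0 *
          ((1 / N) * ∑ j, ((∑ l, f (Function.update x i (x j) l)) / N
            - (∑ l, f (x l)) / N)))
    = (1 / N) * ∑ i, (lam (x i) * ∫ y, (f y - f (x i)) ∂(p (x i))
        + (1 / N) * ∑ j, (max (-(V (x i) - c)) 0 + max (V (x j) - c) 0)
            * (f (x j) - f (x i))) := by
  classical
  haveI : ∀ i : Fin N, IsProbabilityMeasure (p (x i)) := fun i => hp (x i)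
  -- Step 1: compute the integral of the cloning sum
  have hint : ∀ i : Fin N,
      (∫ y, (∑ A : Finset (Fin N),
        (π (x i) A.card / (N.choose A.card : ℝ)) *
          ((∑ j, f (repl x A (x i) i y j)) / N - (∑ j, f (x j)) / N)) ∂(p (x i)))
      = ((∫ y, f y ∂(p (x i))) - f (x i)) / N
        + (max (V (x i) - c) 0 / lam (x i) / N) * ((∑ j, (f (x i) - f (x j))) / N) := by
    intro i
    have hcong : (∫ y, (∑ A : Finset (Fin N),
        (π (x i) A.card / (N.choose A.card : ℝ)) *
          ((∑ j, f (repl x A (x i) i y j)) / N - (∑ j, f (x j)) / N)) ∂(p (x i)))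
      = ∫ y, ((f y - f (x i)) / N
          + (max (V (x i) - c) 0 / lam (x i) / N) * ((∑ j, (f (x i) - f (x j))) / N)) ∂(p (x i)) := by
      refine integral_congr_ae (Filter.Eventually.of_forall fun y => ?_)
      dsimp only
      rw [integrand_eq hN (π (x i)) (hπsum (x i)) f x i y, hmean (x i), div_div]
    rw [hcong]
    have h1 : Integrable (fun y => (f y - f (x i)) / N) (p (x i)) :=
      ((hf _).sub (integrable_const _)).div_const _
    rw [integral_add h1 (integrable_const _), integral_const, probReal_univ,
      one_smul, integral_div,
      integral_sub (hf _) (integrable_const _), integral_const, probReal_univ,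
      one_smul]
  -- Step 2: the killing term
  have hupd : ∀ i j : Fin N, ∑ l, f (Function.update x i (x j) l)
      = (∑ l, f (x l)) - f (x i) + f (x j) := by
    intro i j
    have h1 : ∑ l, f (Function.update x i (x j) l)
        = f (Function.update x i (x j) i)
          + ∑ l ∈ Finset.univ.erase i, f (Function.update x i (x j) l) :=
      (Finset.add_sum_erase _ _ (Finset.mem_univ i)).symm
    have h2 : ∀ l ∈ Finset.univ.erase i, f (Function.update x i (x j) l) = f (x l) := by
      intro l hl
      rw [Function.update_apply, if_neg (Finset.mem_erase.1 hl).1]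
    rw [h1, Function.update_self, Finset.sum_congr rfl h2,
      Finset.sum_erase_eq_sub (Finset.mem_univ i)]
    ring
  -- Step 3: the integral on the right-hand side
  have hRint : ∀ i : Fin N, (∫ y, (f y - f (x i)) ∂(p (x i)))
      = (∫ y, f y ∂(p (x i))) - f (x i) := by
    intro i
    rw [integral_sub (hf _) (integrable_const _), integral_const, probReal_univ,
      one_smul]
  simp only [hint]
  have hkill : ∀ i : Fin N,
      max (-(V (x i) - c)) 0 *
          ((1 / (N : ℝ)) * ∑ j, ((∑ l, f (Function.update x i (x j) l)) / N
            - (∑ l, f (x l)) / N))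
      = max (-(V (x i) - c)) 0 * ((1 / (N : ℝ)) * ∑ j, (f (x j) - f (x i)) / N) := by
    intro i
    congr 2
    refine Finset.sum_congr rfl fun j _ => ?_
    rw [hupd i j]
    ring
  simp only [hkill, hRint]
  have hPi : ∀ i : Fin N, lam (x i) *
      (((∫ y, f y ∂(p (x i))) - f (x i)) / N
        + (max (V (x i) - c) 0 / lam (x i) / N) * ((∑ j, (f (x i) - f (x j))) / N))
      = lam (x i) * (((∫ y, f y ∂(p (x i))) - f (x i)) / N)
        + (1 / (N : ℝ))^2 * ∑ j, max (V (x i) - c) 0 * (f (x i) - f (x j)) := by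
    intro i
    have hl : lam (x i) ≠ 0 := (hlam (x i)).ne'
    rw [← Finset.mul_sum]
    field_simp
  -- Step 4: pure algebra with a sum swap
  rw [Finset.sum_congr rfl fun i _ => hPi i]
  exact final_alg N (fun i => lam (x i)) (fun i => (∫ y, f y ∂(p (x i))) - f (x i))
    (fun i => f (x i)) (fun i => max (V (x i) - c) 0) (fun i => max (-(V (x i) - c)) 0)
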